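/- Assume V₀ < d₀²/4, let X be the unique solution of X = V(A + X) with ‖X‖ ≤ r_min, and set H₁ = A + X. Then the spectrum of H₁ is contained in the closed r_min-neighborhood of the spectrum of A: σ(H₁) ⊆ {z ∈ ℂ : dist(z, σ(A)) ≤ r_min}. -/

import Mathlib

open MeasureTheory Metric Set

noncomputable section

variable {H : Type*} [NormedAddCommGroup H] [InnerProductSpace ℂ H] [CompleteSpace H]

/-- `d₀ = inf_{t ∈ [0,1]} dist (γ t, σ(A))`. -/
noncomputable def curveDist (A : H →L[ℂ] H) (γ : ℝ → ℂ) : ℝ :=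
  ⨅ t : Set.Icc (0 : ℝ) 1, Metric.infDist (γ t) (spectrum ℂ A)

/-- `V₀ = ∫₀¹ |γ'(t)| ‖K(γ(t))‖ dt`. -/
noncomputable def curveVar (K : ℂ → H →L[ℂ] H) (γ : ℝ → ℂ) : ℝ :=
  ∫ t in (0:ℝ)..1, ‖derivWithin γ (Set.Icc 0 1) t‖ * ‖K (γ t)‖

/-- `V(Y) = ∫₀¹ γ'(t) • K(γ(t)) ∘ (Y − γ(t))⁻¹ dt` (Bochner integral in `B(H)`). -/
noncomputable def Vmap (K : ℂ → H →L[ℂ] H) (γ : ℝ → ℂ) (Y : H →L[ℂ] H) : H →L[ℂ] H :=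
  ∫ t in (0:ℝ)..1, derivWithin γ (Set.Icc 0 1) t •
    (K (γ t) ∘L Ring.inverse (Y - γ t • (1 : H →L[ℂ] H)))

/-- `r_min = d₀/2 − √(d₀²/4 − V₀)`. -/
noncomputable def rMin (A : H →L[ℂ] H) (K : ℂ → H →L[ℂ] H) (γ : ℝ → ℂ) : ℝ :=
  curveDist A γ / 2 - Real.sqrt ((curveDist A γ) ^ 2 / 4 - curveVar K γ)

/-- `V₁(z) = ∫₀¹ γ'(t) (z − γ(t))⁻¹ • K(γ(t)) dt`. -/
noncomputable def V1 (K : ℂ → H →L[ℂ] H) (γ : ℝ → ℂ) (z : ℂ) : H →L[ℂ] H :=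
  ∫ t in (0:ℝ)..1, (derivWithin γ (Set.Icc 0 1) t * (z - γ t)⁻¹) • K (γ t)

/-- The continued transfer function `M(z) = A − z + V₁(z)`. -/
noncomputable def Mfun (A : H →L[ℂ] H) (K : ℂ → H →L[ℂ] H) (γ : ℝ → ℂ) (z : ℂ) :
    H →L[ℂ] H :=
  A - z • (1 : H →L[ℂ] H) + V1 K γ z

/-- `σ(H₁) ⊆ {z : dist(z, σ(A)) ≤ r_min}`. -/
theorem statement5 (A : H →L[ℂ] H) (hA : IsSelfAdjoint A)
    (γ : ℝ → ℂ) (hγ : ContDiffOn ℝ 1 γ (Set.Icc 0 1))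
    (hΓ : ∀ t ∈ Set.Icc (0:ℝ) 1, γ t ∉ spectrum ℂ A)
    (K : ℂ → H →L[ℂ] H) (hK : ContinuousOn (fun t => K (γ t)) (Set.Icc 0 1))
    (hV : curveVar K γ < (curveDist A γ) ^ 2 / 4)
    (X : H →L[ℂ] H) (hXn : ‖X‖ ≤ rMin A K γ)
    (hXσ : Disjoint (spectrum ℂ (A + X)) (γ '' Set.Icc (0:ℝ) 1))
    (hX : X = Vmap K γ (A + X)) :
    spectrum ℂ (A + X) ⊆
      {z : ℂ | Metric.infDist z (spectrum ℂ A) ≤ rMin A K γ} := by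
  intro z hz
  simp only [Set.mem_setOf_eq]
  -- it suffices to show `infDist z (spectrum ℂ A) ≤ ‖X‖`
  refine le_trans ?_ hXn
  by_contra h
  push_neg at h
  set d := Metric.infDist z (spectrum ℂ A) with hd
  have hdpos : 0 < d := lt_of_le_of_lt (norm_nonneg X) h
  -- z is not in the spectrum of A
  have hzA : z ∉ spectrum ℂ A := by
    intro hmem
    have : d ≤ 0 := le_of_eq (Metric.infDist_zero_of_mem hmem)
    linarith
  rw [spectrum.notMem_iff] at hzA
  obtain ⟨u, hu⟩ := hzA
  have hu' : (↑u : H →L[ℂ] H) = z • 1 - A := by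
    rw [hu, Algebra.algebraMap_eq_smul_one]
  -- elements of the form `c • 1 - A` commute with each other
  have hc : ∀ c c' : ℂ, Commute (c • (1 : H →L[ℂ] H) - A) (c' • 1 - A) := fun c c' =>
    Commute.sub_left ((Commute.one_left _).smul_left c)
      (Commute.sub_right ((Commute.one_right A).smul_right c') (Commute.refl A))
  -- `↑u⁻¹` is star-normal
  have hcomm : Commute (star (↑u : H →L[ℂ] H)) ↑u := by
    have h1 : star (↑u : H →L[ℂ] H) = (starRingEnd ℂ z) • 1 - A := by
      rw [hu']; simp [star_sub, star_smul, hA.star_eq]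
    rw [h1, hu']; exact hc _ _
  haveI hnormal : IsStarNormal (↑u⁻¹ : H →L[ℂ] H) := by
    constructor
    have h2 : Commute ((↑(star u)⁻¹ : H →L[ℂ] H)) ↑u⁻¹ := by
      have h3 : Commute ((↑(star u) : H →L[ℂ] H)) ↑u := by
        rw [Units.coe_star]; exact hcomm
      exact (h3.units_inv_left).units_inv_right
    rwa [Units.coe_star_inv] at h2
  -- spectral radius bound for `↑u⁻¹`
  have hdinv : (0:ℝ) ≤ d⁻¹ := by positivity
  have hrad : spectralRadius ℂ (↑u⁻¹ : H →L[ℂ] H) ≤ ENNReal.ofReal d⁻¹ := by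
    refine iSup₂_le fun k hk => ?_
    rw [← ENNReal.ofReal_coe_nnreal, coe_nnnorm]
    apply ENNReal.ofReal_le_ofReal
    have hk0 : k ≠ 0 := spectrum.ne_zero_of_mem_of_unit hk
    have hinv : (↑(Units.mk0 k hk0)⁻¹ : ℂ) ∈ spectrum ℂ (↑u : H →L[ℂ] H) := by
      rw [spectrum.inv_mem_iff]
      simpa using hk
    have hinv' : (k⁻¹ : ℂ) ∈ spectrum ℂ (↑u : H →L[ℂ] H) := by
      simpa using hinv
    rw [hu, ← spectrum.singleton_sub_eq, Set.mem_sub] at hinv'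
    obtain ⟨x, hx, y, hy, hxy⟩ := hinv'
    rw [Set.mem_singleton_iff] at hx
    rw [hx] at hxy
    have hdz : d ≤ ‖z - y‖ := by
      rw [← dist_eq_norm]
      exact Metric.infDist_le_dist_of_mem hy
    have hkeq : ‖z - y‖ = ‖k‖⁻¹ := by
      rw [hxy, norm_inv]
    rw [hkeq] at hdz
    have hknorm : (0:ℝ) < ‖k‖ := norm_pos_iff.mpr hk0
    calc ‖k‖ = (‖k‖⁻¹)⁻¹ := by rw [inv_inv]
      _ ≤ d⁻¹ := by
        apply inv_anti₀ hdpos hdz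
  have hnorm : ‖(↑u⁻¹ : H →L[ℂ] H)‖ ≤ d⁻¹ := by
    have heq := IsStarNormal.spectralRadius_eq_nnnorm (↑u⁻¹ : H →L[ℂ] H)
    rw [heq, ← ENNReal.ofReal_coe_nnreal, coe_nnnorm, ENNReal.ofReal_le_ofReal_iff hdinv] at hrad
    exact hrad
  -- now show `z • 1 - (A + X)` is a unit, contradiction
  have hsmall : ‖(↑u⁻¹ : H →L[ℂ] H) * X‖ < 1 := by
    calc ‖(↑u⁻¹ : H →L[ℂ] H) * X‖ ≤ ‖(↑u⁻¹ : H →L[ℂ] H)‖ * ‖X‖ := norm_mul_le _ _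
      _ ≤ d⁻¹ * ‖X‖ := by
        apply mul_le_mul_of_nonneg_right hnorm (norm_nonneg X)
      _ < d⁻¹ * d := by
        apply mul_lt_mul_of_pos_left h (by positivity)
      _ = 1 := inv_mul_cancel₀ (ne_of_gt hdpos)
  have hunit : IsUnit ((algebraMap ℂ (H →L[ℂ] H)) z - (A + X)) := by
    have hfact : (algebraMap ℂ (H →L[ℂ] H)) z - (A + X) =
        ↑u * (1 - (↑u⁻¹ : H →L[ℂ] H) * X) := by
      rw [mul_sub, mul_one, ← mul_assoc, Units.mul_inv, one_mul, hu]
      abel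
    rw [hfact]
    exact (u.isUnit).mul (Units.oneSub _ hsmall).isUnit
  exact (spectrum.notMem_iff.mpr hunit) hz

end
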